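/- Let σ, ξ > 0 and let p^ξ solve p^ξ'(t) = σ l(t) − ξ p^ξ(t), p^ξ(0) = p₀ ≥ 0, with l : [0,T] → ℝ continuous and square-integrable. Then (1/ξ)·(p^ξ(T))² + ∫₀ᵀ (p^ξ(t))² dt ≤ (1/ξ) p₀² + (σ²/ξ²) ∫₀ᵀ l(t)² dt. In particular ∫₀ᵀ (p^ξ)² dt = O(1/ξ) as ξ → ∞ if ∫₀ᵀ l² dt is bounded uniformly in ξ. -/

import Mathlib

/-- Energy-type estimate for the fast species:
`(1/ξ) p(T)² + ∫₀ᵀ p² ≤ (1/ξ) p₀² + (σ²/ξ²) ∫₀ᵀ l²`. -/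
theorem stmt_5 (σ ξ p₀ T : ℝ) (hσ : 0 < σ) (hξ : 0 < ξ) (hp0 : 0 ≤ p₀) (hT : 0 < T)
    (l p : ℝ → ℝ) (hl : Continuous l)
    (hp : ∀ t, HasDerivAt p (σ * l t - ξ * p t) t)
    (hinit : p 0 = p₀) :
    (1 / ξ) * (p T) ^ 2 + ∫ t in (0:ℝ)..T, (p t) ^ 2
      ≤ (1 / ξ) * p₀ ^ 2 + (σ ^ 2 / ξ ^ 2) * ∫ t in (0:ℝ)..T, (l t) ^ 2 := by
  have hpc : Continuous p := by
    rw [continuous_iff_continuousAt]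
    exact fun t => (hp t).continuousAt
  have hderiv : ∀ t ∈ Set.uIcc (0:ℝ) T,
      HasDerivAt (fun s => p s ^ 2) (2 * p t ^ 1 * (σ * l t - ξ * p t)) t := by
    intro t _
    simpa using (hp t).fun_pow 2
  have hcont : Continuous fun t => 2 * p t ^ 1 * (σ * l t - ξ * p t) := by
    continuity
  have heq : (∫ t in (0:ℝ)..T, 2 * p t ^ 1 * (σ * l t - ξ * p t))
      = p T ^ 2 - p 0 ^ 2 :=
    intervalIntegral.integral_eq_sub_of_hasDerivAt hderiv (hcont.intervalIntegrable _ _)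
  have hmono : (∫ t in (0:ℝ)..T, 2 * p t ^ 1 * (σ * l t - ξ * p t))
      ≤ ∫ t in (0:ℝ)..T, (σ ^ 2 / ξ * l t ^ 2 - ξ * p t ^ 2) := by
    apply intervalIntegral.integral_mono_on hT.le (hcont.intervalIntegrable _ _)
      (((by continuity : Continuous fun t => σ ^ 2 / ξ * l t ^ 2 - ξ * p t ^ 2)).intervalIntegrable _ _)
    intro t _
    have key : σ ^ 2 / ξ * l t ^ 2 - ξ * p t ^ 2 - 2 * p t ^ 1 * (σ * l t - ξ * p t)
        = (σ * l t - ξ * p t) ^ 2 / ξ := by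
      field_simp; ring
    have h0 : (0:ℝ) ≤ (σ * l t - ξ * p t) ^ 2 / ξ := div_nonneg (sq_nonneg _) hξ.le
    linarith
  have hIl : IntervalIntegrable (fun t => l t ^ 2) MeasureTheory.volume 0 T :=
    (by continuity : Continuous fun t => l t ^ 2).intervalIntegrable _ _
  have hIp : IntervalIntegrable (fun t => p t ^ 2) MeasureTheory.volume 0 T :=
    (by continuity : Continuous fun t => p t ^ 2).intervalIntegrable _ _
  have hsplit : (∫ t in (0:ℝ)..T, (σ ^ 2 / ξ * l t ^ 2 - ξ * p t ^ 2))
      = σ ^ 2 / ξ * (∫ t in (0:ℝ)..T, l t ^ 2) - ξ * ∫ t in (0:ℝ)..T, p t ^ 2 := by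
    rw [intervalIntegral.integral_sub (hIl.const_mul _) (hIp.const_mul _),
      intervalIntegral.integral_const_mul, intervalIntegral.integral_const_mul]
  set Ip := ∫ t in (0:ℝ)..T, p t ^ 2
  set Il := ∫ t in (0:ℝ)..T, l t ^ 2
  have h1 : p T ^ 2 + ξ * Ip ≤ p₀ ^ 2 + σ ^ 2 / ξ * Il := by
    rw [← hinit]; linarith [heq ▸ hmono, hsplit]
  have hinv : (0:ℝ) < 1 / ξ := by positivity
  have h2 := mul_le_mul_of_nonneg_left h1 hinv.le
  have e1 : 1 / ξ * (p T ^ 2 + ξ * Ip) = 1 / ξ * p T ^ 2 + Ip := by field_simp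
  have e2 : 1 / ξ * (p₀ ^ 2 + σ ^ 2 / ξ * Il) = 1 / ξ * p₀ ^ 2 + σ ^ 2 / ξ ^ 2 * Il := by
    field_simp
  linarith
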